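/- For all i ≥ 0 and r > 0, the function ψ_i satisfies the second-order differential equation ψ_i''(r) + (2i/r)·ψ_i'(r) − ψ_i(r) = 0. -/

import Mathlib

/-- ψ₀(r) = e^{-r}, ψ_{i+1}(r) = -(1/r)·ψ_i'(r). -/
noncomputable def psi : ℕ → ℝ → ℝ
  | 0 => fun r => Real.exp (-r)
  | (i+1) => fun r => -(1/r) * deriv (psi i) r

lemma psi_contDiffOn (i : ℕ) : ContDiffOn ℝ ⊤ (psi i) (Set.Ioi (0:ℝ)) := by
  induction i with
  | zero =>
      show ContDiffOn ℝ ⊤ (fun r : ℝ => Real.exp (-r)) _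
      exact (Real.contDiff_exp.comp contDiff_neg).contDiffOn
  | succ i ih =>
      have hd : ContDiffOn ℝ ⊤ (deriv (psi i)) (Set.Ioi 0) :=
        ih.deriv_of_isOpen isOpen_Ioi le_top
      show ContDiffOn ℝ ⊤ (fun r : ℝ => -(1/r) * deriv (psi i) r) _
      have h1 : ContDiffOn ℝ ⊤ (fun r : ℝ => -(1/r)) (Set.Ioi 0) := by
        simp only [one_div]
        exact (contDiffOn_id.inv fun x hx => ne_of_gt hx).neg
      exact h1.mul hd

lemma smooth_hasDerivAt {f : ℝ → ℝ} (hf : ContDiffOn ℝ ⊤ f (Set.Ioi (0:ℝ)))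
    {s : ℝ} (hs : 0 < s) : HasDerivAt f (deriv f s) s := by
  have h := (hf.contDiffAt (isOpen_Ioi.mem_nhds hs)).differentiableAt (by simp)
  exact h.hasDerivAt

theorem psi_ode (i : ℕ) (r : ℝ) (hr : 0 < r) :
    deriv (deriv (psi i)) r + (2 * (i : ℝ) / r) * deriv (psi i) r - psi i r = 0 := by
  induction i generalizing r hr with
  | zero =>
      have h0 : ∀ x : ℝ, HasDerivAt (psi 0) (-Real.exp (-x)) x := by
        intro x
        have := (Real.hasDerivAt_exp (-x)).comp x (hasDerivAt_neg x)
        rw [show psi 0 = Real.exp ∘ Neg.neg from rfl]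
        simpa [mul_comm] using this
      have hd : deriv (psi 0) = fun x => -Real.exp (-x) := funext fun x => (h0 x).deriv
      have h1 : HasDerivAt (fun x => -Real.exp (-x)) (Real.exp (-r)) r := by
        exact (by simpa using (h0 r).neg : HasDerivAt (-psi 0) (Real.exp (-r)) r)
      rw [hd, h1.deriv]
      simp [psi]
  | succ i ih =>
      set ψ := psi i with hψdef
      set dψ := deriv ψ with hdψdef
      set d2 := deriv dψ with hd2def
      set d3 := deriv d2 with hd3def
      have hcd : ContDiffOn ℝ ⊤ ψ (Set.Ioi 0) := psi_contDiffOn i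
      have hcd1 : ContDiffOn ℝ ⊤ dψ (Set.Ioi 0) := hcd.deriv_of_isOpen isOpen_Ioi le_top
      have hcd2 : ContDiffOn ℝ ⊤ d2 (Set.Ioi 0) := hcd1.deriv_of_isOpen isOpen_Ioi le_top
      have hψ : ∀ s : ℝ, 0 < s → HasDerivAt ψ (dψ s) s := fun s hs => smooth_hasDerivAt hcd hs
      have hdψ : ∀ s : ℝ, 0 < s → HasDerivAt dψ (d2 s) s := fun s hs => smooth_hasDerivAt hcd1 hs
      have hd2 : ∀ s : ℝ, 0 < s → HasDerivAt d2 (d3 s) s := fun s hs => smooth_hasDerivAt hcd2 hs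
      -- psi (i+1) as a function
      have hg : psi (i+1) = fun s : ℝ => -s⁻¹ * dψ s := by
        funext s; simp [psi, one_div]; exact Or.inl rfl
      -- first derivative of psi (i+1) on Ioi 0
      have hinv : ∀ s : ℝ, 0 < s → HasDerivAt (fun y : ℝ => -y⁻¹) ((s^2)⁻¹) s := by
        intro s hs
        exact (by simpa using (hasDerivAt_inv (ne_of_gt hs)).neg : HasDerivAt (-fun y : ℝ => y⁻¹) ((s^2)⁻¹) s)
      set g1 : ℝ → ℝ := fun s => (s^2)⁻¹ * dψ s + -s⁻¹ * d2 s with hg1def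
      have hderiv1 : ∀ s : ℝ, 0 < s → HasDerivAt (psi (i+1)) (g1 s) s := by
        intro s hs
        rw [hg]
        exact (hinv s hs).mul (hdψ s hs)
      have hderiv1' : deriv (psi (i+1)) r = g1 r := (hderiv1 r hr).deriv
      -- deriv (psi (i+1)) = g1 near r
      have hev : deriv (psi (i+1)) =ᶠ[nhds r] g1 := by
        filter_upwards [isOpen_Ioi.mem_nhds hr] with s hs
        exact (hderiv1 s hs).deriv
      -- second derivative
      have hsq : HasDerivAt (fun y : ℝ => (y^2)⁻¹) (-(2*r) / (r^2)^2) r := by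
        exact (by simpa using (hasDerivAt_pow 2 r).inv (by positivity) : HasDerivAt (fun x : ℝ => x ^ 2)⁻¹ (-(2*r) / (r^2)^2) r)
      have hinvr : HasDerivAt (fun y : ℝ => -y⁻¹) ((r^2)⁻¹) r := hinv r hr
      have hg1 : HasDerivAt g1
          ((-(2*r) / (r^2)^2) * dψ r + (r^2)⁻¹ * d2 r + ((r^2)⁻¹ * d2 r + -r⁻¹ * d3 r)) r :=
        ((hsq.mul (hdψ r hr)).add (hinvr.mul (hd2 r hr)))
      have hderiv2 : deriv (deriv (psi (i+1))) r
          = (-(2*r) / (r^2)^2) * dψ r + (r^2)⁻¹ * d2 r + ((r^2)⁻¹ * d2 r + -r⁻¹ * d3 r) := by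
        rw [hev.deriv_eq]
        exact hg1.deriv
      -- from IH: d2 s = ψ s - (2i/s) dψ s on Ioi 0
      have hIH : ∀ s : ℝ, 0 < s → d2 s = ψ s - (2 * (i:ℝ) / s) * dψ s := by
        intro s hs
        have := ih s hs
        linarith
      -- compute d3 r using the IH relation
      have hevd2 : d2 =ᶠ[nhds r] fun s => ψ s - (2 * (i:ℝ) / s) * dψ s := by
        filter_upwards [isOpen_Ioi.mem_nhds hr] with s hs
        exact hIH s hs
      have hc : HasDerivAt (fun s : ℝ => 2 * (i:ℝ) / s) (-(2 * (i:ℝ)) / r^2) r := by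
        simpa [div_eq_mul_inv, mul_comm, neg_div] using
          ((hasDerivAt_inv (ne_of_gt hr)).const_mul (2 * (i:ℝ)))
      have hd3 : d3 r = dψ r - ((-(2 * (i:ℝ)) / r^2) * dψ r + (2 * (i:ℝ) / r) * d2 r) := by
        rw [hd3def, hevd2.deriv_eq]
        exact ((hψ r hr).sub (hc.mul (hdψ r hr))).deriv
      -- put everything together
      rw [hderiv2, hderiv1', hg, hg1def, hd3]
      beta_reduce
      rw [hIH r hr]
      have hr' : r ≠ 0 := ne_of_gt hr
      push_cast
      field_simp
      ring
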